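/- Let Ω = (0,∞) with Lebesgue measure μ. For every f ∈ (L¹+L^∞)∖R_μ there exists a Dunford–Schwartz operator T on L¹+L^∞ such that the ergodic averages a_n(μ_t(f)) = (1/n)Σ_{k=0}^{n-1}T^k(μ_·(f))(t) fail to converge for almost every t; in fact they fail to converge for all t in some interval (ε,1). -/

import Mathlib

open MeasureTheory Filter
open scoped ENNReal

/-- Lebesgue measure on `Ω = (0,∞)`. -/
noncomputable def lebOn : Measure ℝ := volume.restrict (Set.Ioi (0:ℝ))

/-- Non-increasing rearrangement. -/
noncomputable def rearr (μ : Measure ℝ) (f : ℝ → ℝ) (t : ℝ) : ℝ :=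
  sInf {l : ℝ | 0 < l ∧ μ {x | l < |f x|} ≤ ENNReal.ofReal t}

/-- Membership in `L¹ + L^∞`. -/
def MemL1pLinf (μ : Measure ℝ) (f : ℝ → ℝ) : Prop :=
  ∃ g h : ℝ → ℝ, f = g + h ∧ Integrable g μ ∧ MemLp h ⊤ μ

/-- A Dunford–Schwartz operator. -/
structure DS (μ : Measure ℝ) where
  toFun : (ℝ → ℝ) → (ℝ → ℝ)
  map_add : ∀ f g, toFun (f + g) = toFun f + toFun g
  map_smul : ∀ (c : ℝ) (f : ℝ → ℝ), toFun (c • f) = c • toFun f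
  l1_contraction : ∀ f, eLpNorm (toFun f) 1 μ ≤ eLpNorm f 1 μ
  linf_contraction : ∀ f, eLpNorm (toFun f) ⊤ μ ≤ eLpNorm f ⊤ μ

namespace Stmt12Aux

/-- Block index: the largest `i` with `(i+1)! ≤ k` (and `0` if there is none). -/
def blk (k : ℕ) : ℕ := Nat.findGreatest (fun i => Nat.factorial (i+1) ≤ k) k

lemma blk_eq {i k : ℕ} (h1 : Nat.factorial (i+1) ≤ k) (h2 : k < Nat.factorial (i+2)) :
    blk k = i := by
  rw [blk, Nat.findGreatest_eq_iff]
  refine ⟨le_trans (by omega : i ≤ i + 1) (le_trans (Nat.self_le_factorial _) h1),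
    fun _ => h1, fun n hn _ hP => ?_⟩
  have : Nat.factorial (i+2) ≤ Nat.factorial (n+1) := Nat.factorial_le (by omega)
  omega

lemma blk_zero : blk 0 = 0 := by
  rw [blk, Nat.findGreatest_eq_iff]
  exact ⟨le_rfl, fun h => absurd rfl h, fun n hn hk _ => by omega⟩

/-- The sign sequence `σ k = (-1)^(blk k)`. -/
noncomputable def sg (k : ℕ) : ℝ := (-1)^(blk k)

lemma sg_one_or_neg_one (k : ℕ) : sg k = 1 ∨ sg k = -1 := by
  rcases Nat.even_or_odd (blk k) with h | h
  · exact Or.inl (h.neg_one_pow)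
  · exact Or.inr (h.neg_one_pow)

lemma sg_sq (k : ℕ) : sg k * sg k = 1 := by
  rcases sg_one_or_neg_one k with h | h <;> rw [h] <;> norm_num

lemma abs_sg (k : ℕ) : |sg k| = 1 := by
  rcases sg_one_or_neg_one k with h | h <;> rw [h] <;> norm_num

lemma sg_zero : sg 0 = 1 := by rw [sg, blk_zero]; norm_num

lemma sg_block {i k : ℕ} (h1 : Nat.factorial (i+1) ≤ k) (h2 : k < Nat.factorial (i+2)) :
    sg k = (-1)^i := by rw [sg, blk_eq h1 h2]

/-- The multiplier sequence indexed by integers. -/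
noncomputable def eps (m : ℤ) : ℝ := if m < 0 then 1 else sg (m.toNat + 1) * sg m.toNat

lemma abs_eps (m : ℤ) : |eps m| = 1 := by
  rw [eps]
  split
  · norm_num
  · rw [abs_mul, abs_sg, abs_sg]; norm_num

/-- The pointwise multiplier. -/
noncomputable def phi (t : ℝ) : ℝ := eps ⌊t⌋

lemma abs_phi (t : ℝ) : |phi t| = 1 := abs_eps _

/-- The Dunford–Schwartz operator: a signed shift. -/
noncomputable def Top (h : ℝ → ℝ) : ℝ → ℝ := fun t => phi t * h (t + 1)

lemma Top_iter (h : ℝ → ℝ) (k : ℕ) : ∀ t : ℝ,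
    (Top^[k] h) t = (∏ j ∈ Finset.range k, phi (t + j)) * h (t + k) := by
  induction k with
  | zero => intro t; simp
  | succ k ih =>
    intro t
    rw [Function.iterate_succ_apply']
    show phi t * (Top^[k] h) (t + 1) = _
    rw [ih (t+1), Finset.prod_range_succ']
    have e2 : h (t + 1 + (k:ℝ)) = h (t + ((k:ℕ)+1 : ℕ)) := by push_cast; ring_nf
    have e1 : (∏ j ∈ Finset.range k, phi (t + 1 + (j:ℝ)))
        = ∏ j ∈ Finset.range k, phi (t + ((j:ℕ)+1 : ℕ)) :=
      Finset.prod_congr rfl fun j _ => by push_cast; ring_nf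
    have e0 : phi (t + ((0:ℕ):ℝ)) = phi t := by norm_num
    rw [e2, e1, e0]; ring

lemma phi_add {t : ℝ} (ht : t ∈ Set.Ioo (0:ℝ) 1) (j : ℕ) :
    phi (t + (j:ℝ)) = sg (j+1) * sg j := by
  have hfl : ⌊t + (j:ℝ)⌋ = (j:ℤ) := by
    rw [Int.floor_eq_iff]
    constructor
    · push_cast; linarith [ht.1]
    · push_cast; linarith [ht.2]
  rw [phi, hfl, eps]
  simp

lemma prod_sg (k : ℕ) : (∏ j ∈ Finset.range k, (sg (j+1) * sg j)) = sg k := by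
  induction k with
  | zero => simp [sg_zero]
  | succ k ih =>
    rw [Finset.prod_range_succ, ih]
    calc sg k * (sg (k+1) * sg k) = sg (k+1) * (sg k * sg k) := by ring
    _ = sg (k+1) := by rw [sg_sq, mul_one]

/-- On `(0,1)` the iterates of the operator are just signed shifts by integers. -/
lemma iter_eval (h : ℝ → ℝ) (k : ℕ) {t : ℝ} (ht : t ∈ Set.Ioo (0:ℝ) 1) :
    (Top^[k] h) t = sg k * h (t + k) := by
  rw [Top_iter]
  congr 1
  rw [Finset.prod_congr rfl (fun j _ => phi_add ht j), prod_sg]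

/-- The operator contracts every `L^p` norm on `lebOn`. -/
lemma eLp_le (p : ℝ≥0∞) (h : ℝ → ℝ) : eLpNorm (Top h) p lebOn ≤ eLpNorm h p lebOn := by
  have h1 : eLpNorm (Top h) p lebOn = eLpNorm (fun t => h (t+1)) p lebOn := by
    refine eLpNorm_congr_norm_ae (Filter.Eventually.of_forall fun t => ?_)
    rw [Top, Real.norm_eq_abs, Real.norm_eq_abs, abs_mul, abs_phi, one_mul]
  rw [h1]
  have hemb : MeasurableEmbedding (fun x : ℝ => x + 1) :=
    (Homeomorph.addRight (1:ℝ)).measurableEmbedding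
  have h2 : (fun t : ℝ => h (t+1)) = h ∘ (fun x : ℝ => x + 1) := rfl
  rw [h2, ← hemb.eLpNorm_map_measure]
  refine eLpNorm_mono_measure _ ?_
  rw [Measure.le_iff]
  intro s hs
  rw [Measure.map_apply (by measurability) hs]
  rw [lebOn, Measure.restrict_apply hs, Measure.restrict_apply (hemb.measurable hs)]
  have e : (fun x : ℝ => x + 1) ⁻¹' s ∩ Set.Ioi 0 = (fun x : ℝ => x + 1) ⁻¹' (s ∩ Set.Ioi 1) := by
    ext x
    simp only [Set.mem_inter_iff, Set.mem_preimage, Set.mem_Ioi]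
    constructor
    · rintro ⟨hx, hx0⟩; exact ⟨hx, by linarith⟩
    · rintro ⟨hx, hx1⟩; exact ⟨hx, by linarith⟩
  rw [e, measure_preimage_add_right]
  exact measure_mono (Set.inter_subset_inter_right _ (Set.Ioi_subset_Ioi (by norm_num)))

lemma rearr_nonneg (f : ℝ → ℝ) (t : ℝ) : 0 ≤ rearr lebOn f t :=
  Real.sInf_nonneg fun _ hl => le_of_lt hl.1

lemma S_nonempty (f : ℝ → ℝ) (hf : MemL1pLinf lebOn f) {t : ℝ} (ht : 0 < t) :
    {l : ℝ | 0 < l ∧ lebOn {x | l < |f x|} ≤ ENNReal.ofReal t}.Nonempty := by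
  obtain ⟨g₀, h₀, hfeq, hg₀, hh₀⟩ := hf
  set M : ℝ := (eLpNorm h₀ ⊤ lebOn).toReal with hM
  have hM0 : 0 ≤ M := ENNReal.toReal_nonneg
  have hMae : ∀ᵐ x ∂lebOn, |h₀ x| ≤ M := by
    have h1 := ae_le_eLpNormEssSup (f := h₀) (μ := lebOn)
    have h2 : eLpNormEssSup h₀ lebOn ≠ ⊤ := by
      rw [← eLpNorm_exponent_top]; exact hh₀.eLpNorm_lt_top.ne
    filter_upwards [h1] with x hx
    have := ENNReal.toReal_mono h2 hx
    simpa [hM, eLpNorm_exponent_top, Real.norm_eq_abs] using this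
  set I : ℝ≥0∞ := ∫⁻ x, ‖g₀ x‖₊ ∂lebOn with hIdef
  have hI : I ≠ ⊤ := hg₀.2.ne
  set a : ℝ := I.toReal / t + 1 with ha
  have ha0 : 0 < a := by positivity
  have hmark : lebOn {x | ENNReal.ofReal a ≤ ‖g₀ x‖₊} ≤ I / ENNReal.ofReal a :=
    meas_ge_le_lintegral_div hg₀.aestronglyMeasurable.aemeasurable.nnnorm.coe_nnreal_ennreal
      (ENNReal.ofReal_pos.mpr ha0).ne' ENNReal.ofReal_ne_top
  have hIt : I / ENNReal.ofReal a ≤ ENNReal.ofReal t := by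
    rw [ENNReal.div_le_iff (ENNReal.ofReal_pos.mpr ha0).ne' ENNReal.ofReal_ne_top]
    rw [← ENNReal.ofReal_mul (le_of_lt ht)]
    have : t * a = I.toReal + t := by
      have htne : t ≠ 0 := ne_of_gt ht
      rw [ha, mul_add, mul_one, mul_div_assoc', mul_comm t, mul_div_assoc, div_self htne, mul_one]
    rw [this]
    calc I = ENNReal.ofReal I.toReal := (ENNReal.ofReal_toReal hI).symm
    _ ≤ ENNReal.ofReal (I.toReal + t) := ENNReal.ofReal_le_ofReal (by linarith)
  refine ⟨M + a, by positivity, ?_⟩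
  calc lebOn {x | M + a < |f x|} ≤ lebOn {x | ENNReal.ofReal a ≤ ‖g₀ x‖₊} := by
        refine measure_mono_ae ?_
        filter_upwards [hMae] with x hx hmem
        have hfx : f x = g₀ x + h₀ x := by rw [hfeq]; rfl
        have : a ≤ |g₀ x| := by
          have := abs_add_le (g₀ x) (h₀ x)
          rw [← hfx] at this
          have hmem' : M + a < |f x| := hmem
          linarith
        show ENNReal.ofReal a ≤ (‖g₀ x‖₊ : ℝ≥0∞)
        calc ENNReal.ofReal a ≤ ENNReal.ofReal |g₀ x| := ENNReal.ofReal_le_ofReal this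
        _ = ‖g₀ x‖₊ := by rw [← Real.norm_eq_abs]; exact ofReal_norm_eq_enorm _
  _ ≤ I / ENNReal.ofReal a := hmark
  _ ≤ ENNReal.ofReal t := hIt

lemma rearr_mono (f : ℝ → ℝ) (hf : MemL1pLinf lebOn f) {s t : ℝ} (hs : 0 < s) (hst : s ≤ t) :
    rearr lebOn f t ≤ rearr lebOn f s := by
  refine csInf_le_csInf ⟨0, fun l hl => le_of_lt hl.1⟩ (S_nonempty f hf hs) ?_
  intro l hl
  exact ⟨hl.1, le_trans hl.2 (ENNReal.ofReal_le_ofReal hst)⟩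

lemma rearr_lower (f : ℝ → ℝ) (hf : MemL1pLinf lebOn f)
    (hnot : ¬ Tendsto (rearr lebOn f) atTop (nhds 0)) :
    ∃ c : ℝ, 0 < c ∧ ∀ s : ℝ, 0 < s → c ≤ rearr lebOn f s := by
  rw [NormedAddCommGroup.tendsto_nhds_zero] at hnot
  push_neg at hnot
  obtain ⟨c, hc, hfreq⟩ := hnot
  refine ⟨c, hc, fun s hs => ?_⟩
  obtain ⟨b, hsb, hb⟩ := Filter.frequently_atTop.mp hfreq s
  have hb' : c ≤ rearr lebOn f b := by
    rw [Real.norm_eq_abs, abs_of_nonneg (rearr_nonneg f b)] at hb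
    exact hb
  exact le_trans hb' (rearr_mono f hf hs hsb)

/-- Main divergence lemma: the signed averages of a sequence pinched between positive
constants do not converge. -/
lemma diverge (G : ℕ → ℝ) (c C : ℝ) (hc : 0 < c) (hlb : ∀ k, c ≤ G k) (hub : ∀ k, G k ≤ C) :
    ¬ ∃ L : ℝ, Tendsto (fun n : ℕ => (∑ k ∈ Finset.range n, sg k * G k) / (n:ℝ)) atTop
      (nhds L) := by
  have hC : 0 < C := lt_of_lt_of_le hc (le_trans (hlb 0) (hub 0))
  have keylow : ∀ i : ℕ, Even i →
      c - (C+c)/((i:ℝ)+2) ≤ (∑ k ∈ Finset.range (Nat.factorial (i+2)), sg k * G k) /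
        ((Nat.factorial (i+2) : ℝ)) := by
    intro i hi
    set m := Nat.factorial (i+1) with hmdef
    set n := Nat.factorial (i+2) with hndef
    have hmn : m ≤ n := Nat.factorial_le (by omega)
    have hm0 : 0 < m := Nat.factorial_pos _
    have hn0 : 0 < n := Nat.factorial_pos _
    have hnm : n = (i+2) * m := Nat.factorial_succ (i+1)
    have hsplit : ∑ k ∈ Finset.range n, sg k * G k
        = (∑ k ∈ Finset.Ico 0 m, sg k * G k) + ∑ k ∈ Finset.Ico m n, sg k * G k := by
      rw [Finset.range_eq_Ico, ← Finset.sum_Ico_consecutive _ (Nat.zero_le m) hmn]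
    have hS1 : -((m:ℝ)*C) ≤ ∑ k ∈ Finset.Ico 0 m, sg k * G k := by
      have hterm : ∀ k ∈ Finset.Ico 0 m, -C ≤ sg k * G k := by
        intro k _
        rcases sg_one_or_neg_one k with h | h <;> rw [h] <;>
          [skip; rw [neg_one_mul]] <;> [linarith [hlb k]; linarith [hub k]]
      have := Finset.card_nsmul_le_sum (Finset.Ico 0 m) (fun k => sg k * G k) (-C) hterm
      simpa [Nat.card_Ico, nsmul_eq_mul, mul_neg] using this
    have hS2 : ((n:ℝ) - m) * c ≤ ∑ k ∈ Finset.Ico m n, sg k * G k := by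
      have hsg : ∀ k ∈ Finset.Ico m n, sg k * G k = G k := by
        intro k hk
        rw [sg_block (Finset.mem_Ico.mp hk).1 (Finset.mem_Ico.mp hk).2, hi.neg_one_pow, one_mul]
      rw [Finset.sum_congr rfl hsg]
      have := Finset.card_nsmul_le_sum (Finset.Ico m n) G c (fun k _ => hlb k)
      rw [Nat.card_Ico, nsmul_eq_mul, Nat.cast_sub hmn] at this
      exact this
    have hnR : (0:ℝ) < n := Nat.cast_pos.mpr hn0
    have hnmR : (n:ℝ) = ((i:ℝ)+2) * m := by rw [hnm]; push_cast; ring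
    have heq : (((n:ℝ) - m)*c - m*C)/(n:ℝ) = c - (C+c)/((i:ℝ)+2) := by
      rw [hnmR]
      have hmR : (m:ℝ) ≠ 0 := Nat.cast_ne_zero.mpr hm0.ne'
      have hi2 : ((i:ℝ)+2) ≠ 0 := by positivity
      field_simp
      ring
    rw [← heq]
    rw [div_le_div_iff_of_pos_right hnR]
    linarith [hS1, hS2, hsplit.ge, hsplit.le]
  have keyhigh : ∀ i : ℕ, Odd i →
      (∑ k ∈ Finset.range (Nat.factorial (i+2)), sg k * G k) / ((Nat.factorial (i+2) : ℝ))
        ≤ -c + (C+c)/((i:ℝ)+2) := by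
    intro i hi
    set m := Nat.factorial (i+1) with hmdef
    set n := Nat.factorial (i+2) with hndef
    have hmn : m ≤ n := Nat.factorial_le (by omega)
    have hm0 : 0 < m := Nat.factorial_pos _
    have hn0 : 0 < n := Nat.factorial_pos _
    have hnm : n = (i+2) * m := Nat.factorial_succ (i+1)
    have hsplit : ∑ k ∈ Finset.range n, sg k * G k
        = (∑ k ∈ Finset.Ico 0 m, sg k * G k) + ∑ k ∈ Finset.Ico m n, sg k * G k := by
      rw [Finset.range_eq_Ico, ← Finset.sum_Ico_consecutive _ (Nat.zero_le m) hmn]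
    have hS1 : ∑ k ∈ Finset.Ico 0 m, sg k * G k ≤ (m:ℝ)*C := by
      have hterm : ∀ k ∈ Finset.Ico 0 m, sg k * G k ≤ C := by
        intro k _
        rcases sg_one_or_neg_one k with h | h <;> rw [h] <;>
          [skip; rw [neg_one_mul]] <;> [linarith [hub k]; linarith [hlb k]]
      have := Finset.sum_le_card_nsmul (Finset.Ico 0 m) (fun k => sg k * G k) C hterm
      simpa [Nat.card_Ico, nsmul_eq_mul] using this
    have hS2 : ∑ k ∈ Finset.Ico m n, sg k * G k ≤ -(((n:ℝ) - m) * c) := by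
      have hsg : ∀ k ∈ Finset.Ico m n, sg k * G k = -G k := by
        intro k hk
        rw [sg_block (Finset.mem_Ico.mp hk).1 (Finset.mem_Ico.mp hk).2, hi.neg_one_pow,
          neg_one_mul]
      rw [Finset.sum_congr rfl hsg, Finset.sum_neg_distrib, neg_le_neg_iff]
      have := Finset.card_nsmul_le_sum (Finset.Ico m n) G c (fun k _ => hlb k)
      rw [Nat.card_Ico, nsmul_eq_mul, Nat.cast_sub hmn] at this
      exact this
    have hnR : (0:ℝ) < n := Nat.cast_pos.mpr hn0
    have hnmR : (n:ℝ) = ((i:ℝ)+2) * m := by rw [hnm]; push_cast; ring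
    have heq : ((m:ℝ)*C - ((n:ℝ) - m)*c)/(n:ℝ) = -c + (C+c)/((i:ℝ)+2) := by
      rw [hnmR]
      have hmR : (m:ℝ) ≠ 0 := Nat.cast_ne_zero.mpr hm0.ne'
      have hi2 : ((i:ℝ)+2) ≠ 0 := by positivity
      field_simp
      ring
    rw [← heq]
    rw [div_le_div_iff_of_pos_right hnR]
    linarith [hS1, hS2, hsplit.ge, hsplit.le]
  rintro ⟨L, hL⟩
  set a : ℕ → ℝ := fun n => (∑ k ∈ Finset.range n, sg k * G k) / (n:ℝ) with hadef
  have hu : Tendsto (fun j : ℕ => Nat.factorial (2*j+2)) atTop atTop :=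
    Filter.tendsto_atTop_atTop.mpr fun b =>
      ⟨b, fun j hj => le_trans (le_trans hj (by omega)) (Nat.self_le_factorial (2*j+2))⟩
  have hv : Tendsto (fun j : ℕ => Nat.factorial (2*j+3)) atTop atTop :=
    Filter.tendsto_atTop_atTop.mpr fun b =>
      ⟨b, fun j hj => le_trans (le_trans hj (by omega)) (Nat.self_le_factorial (2*j+3))⟩
  have hLa : Tendsto (fun j => a (Nat.factorial (2*j+2))) atTop (nhds L) := hL.comp hu
  have hLb : Tendsto (fun j => a (Nat.factorial (2*j+3))) atTop (nhds L) := hL.comp hv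
  have htb1 : Tendsto (fun j : ℕ => c - (C+c)/(2*(j:ℝ)+2)) atTop (nhds c) := by
    have hden : Tendsto (fun j : ℕ => (2*(j:ℝ)+2)) atTop atTop :=
      tendsto_atTop_add_const_right _ 2
        (Tendsto.const_mul_atTop two_pos tendsto_natCast_atTop_atTop)
    have h0 : Tendsto (fun j : ℕ => (C+c)/(2*(j:ℝ)+2)) atTop (nhds 0) :=
      Tendsto.div_atTop tendsto_const_nhds hden
    simpa using tendsto_const_nhds.sub h0
  have htb2 : Tendsto (fun j : ℕ => -c + (C+c)/(2*(j:ℝ)+3)) atTop (nhds (-c)) := by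
    have hden : Tendsto (fun j : ℕ => (2*(j:ℝ)+3)) atTop atTop :=
      tendsto_atTop_add_const_right _ 3
        (Tendsto.const_mul_atTop two_pos tendsto_natCast_atTop_atTop)
    have h0 : Tendsto (fun j : ℕ => (C+c)/(2*(j:ℝ)+3)) atTop (nhds 0) :=
      Tendsto.div_atTop tendsto_const_nhds hden
    simpa using tendsto_const_nhds.add h0
  have hcL : c ≤ L := by
    refine le_of_tendsto_of_tendsto' htb1 hLa fun j => ?_
    have := keylow (2*j) ⟨j, by omega⟩
    have hcast : ((2*j:ℕ):ℝ) + 2 = 2*(j:ℝ)+2 := by push_cast; ring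
    rw [hcast] at this
    exact this
  have hLc : L ≤ -c := by
    refine le_of_tendsto_of_tendsto' hLb htb2 fun j => ?_
    have := keyhigh (2*j+1) ⟨j, by omega⟩
    have hcast : ((2*j+1:ℕ):ℝ) + 2 = 2*(j:ℝ)+3 := by push_cast; ring
    rw [hcast] at this
    exact this
  linarith

end Stmt12Aux

/-- On `Ω = (0,∞)` with Lebesgue measure, for any `f ∈ (L¹+L^∞) ∖ R_μ` there is a
Dunford–Schwartz operator `T` whose ergodic averages applied to `μ_·(f)` do not
converge a.e.; in fact they diverge at every point of some interval `(ε,1)`. -/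
theorem stmt12 (f : ℝ → ℝ) (hf : MemL1pLinf lebOn f)
    (hnot : ¬ Tendsto (rearr lebOn f) atTop (nhds 0)) :
    ∃ T : DS lebOn,
      (¬ ∀ᵐ t ∂lebOn, ∃ L : ℝ, Tendsto
          (fun n : ℕ => (∑ k ∈ Finset.range n, (T.toFun^[k] (rearr lebOn f)) t) / (n : ℝ))
          atTop (nhds L)) ∧
      ∃ ε : ℝ, 0 < ε ∧ ε < 1 ∧ ∀ t ∈ Set.Ioo ε 1,
        ¬ ∃ L : ℝ, Tendsto
          (fun n : ℕ => (∑ k ∈ Finset.range n, (T.toFun^[k] (rearr lebOn f)) t) / (n : ℝ))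
          atTop (nhds L) := by
  obtain ⟨c, hc, hclb⟩ := Stmt12Aux.rearr_lower f hf hnot
  set C : ℝ := rearr lebOn f (1/2) with hCdef
  refine ⟨⟨Stmt12Aux.Top,
    fun u v => funext fun t => by simp only [Stmt12Aux.Top, Pi.add_apply]; ring,
    fun r u => funext fun t => by
      simp only [Stmt12Aux.Top, Pi.smul_apply, smul_eq_mul]; ring,
    fun u => Stmt12Aux.eLp_le 1 u,
    fun u => Stmt12Aux.eLp_le ⊤ u⟩, ?_⟩
  have hdiv : ∀ t ∈ Set.Ioo (1/2 : ℝ) 1, ¬ ∃ L : ℝ, Tendsto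
      (fun n : ℕ => (∑ k ∈ Finset.range n, (Stmt12Aux.Top^[k] (rearr lebOn f)) t) / (n : ℝ))
      atTop (nhds L) := by
    intro t ht
    have ht01 : t ∈ Set.Ioo (0:ℝ) 1 := ⟨by linarith [ht.1], ht.2⟩
    have hsum : (fun n : ℕ =>
        (∑ k ∈ Finset.range n, (Stmt12Aux.Top^[k] (rearr lebOn f)) t) / (n : ℝ))
        = fun n : ℕ =>
        (∑ k ∈ Finset.range n, Stmt12Aux.sg k * rearr lebOn f (t + k)) / (n : ℝ) :=
      funext fun n => by
        rw [Finset.sum_congr rfl fun k _ => Stmt12Aux.iter_eval (rearr lebOn f) k ht01]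
    rw [hsum]
    refine Stmt12Aux.diverge (fun k => rearr lebOn f (t + k)) c C hc (fun k => ?_) (fun k => ?_)
    · refine hclb (t + k) ?_
      have := ht01.1
      have := Nat.cast_nonneg (α := ℝ) k
      linarith
    · rw [hCdef]
      refine Stmt12Aux.rearr_mono f hf (by norm_num) ?_
      have := ht.1
      have := Nat.cast_nonneg (α := ℝ) k
      linarith
  refine ⟨?_, 1/2, by norm_num, by norm_num, hdiv⟩
  intro hae
  rw [MeasureTheory.ae_iff] at hae
  have hsub : Set.Ioo (1/2:ℝ) 1 ⊆ {t | ¬ ∃ L : ℝ, Tendsto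
      (fun n : ℕ => (∑ k ∈ Finset.range n, (Stmt12Aux.Top^[k] (rearr lebOn f)) t) / (n : ℝ))
      atTop (nhds L)} := fun t ht => hdiv t ht
  have hmle := measure_mono (μ := lebOn) hsub
  rw [hae] at hmle
  have hm : lebOn (Set.Ioo (1/2:ℝ) 1) = ENNReal.ofReal (1/2) := by
    have hss : Set.Ioo (1/2:ℝ) 1 ⊆ Set.Ioi (0:ℝ) := fun x hx => lt_trans one_half_pos hx.1
    rw [lebOn, Measure.restrict_apply measurableSet_Ioo, Set.inter_eq_left.mpr hss,
      Real.volume_Ioo]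
    norm_num
  rw [hm] at hmle
  have hpos : (0:ℝ≥0∞) < ENNReal.ofReal (1/2) := ENNReal.ofReal_pos.mpr (by norm_num)
  exact absurd (le_antisymm hmle zero_le) hpos.ne'
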